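/- Let R be a square in ℂ, let A ⊆ R be a nonempty subset, and let F be a family of squares contained in R such that for every a ∈ A there is a δ > 0 such that every square S ⊆ R with a ∈ S and diam(S) < δ belongs to F. Then there exists an at most countable subfamily G ⊆ F whose members have pairwise disjoint interiors and whose union covers A. -/

import Mathlib

open Set

/-- The (closed) square with lower-left corner `x + yi` and side length `s`. -/
def closedSquare (x y s : ℝ) : Set ℂ :=
  {z : ℂ | z.re ∈ Icc x (x + s) ∧ z.im ∈ Icc y (y + s)}

/-- Dyadic subinterval of `[x₀, x₀ + s₀]` at level `n`, index `i`. -/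
def dI (x₀ s₀ : ℝ) (n i : ℕ) : Set ℝ :=
  Icc (x₀ + i * (s₀ / 2 ^ n)) (x₀ + (i + 1) * (s₀ / 2 ^ n))

/-- Dyadic subsquare at level `n`, indices `i j`. -/
def dSq (x₀ y₀ s₀ : ℝ) (n i j : ℕ) : Set ℂ :=
  closedSquare (x₀ + i * (s₀ / 2 ^ n)) (y₀ + j * (s₀ / 2 ^ n)) (s₀ / 2 ^ n)

lemma mem_dSq {x₀ y₀ s₀ : ℝ} {n i j : ℕ} {z : ℂ} :
    z ∈ dSq x₀ y₀ s₀ n i j ↔ z.re ∈ dI x₀ s₀ n i ∧ z.im ∈ dI y₀ s₀ n j := by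
  have hx : x₀ + i * (s₀ / 2 ^ n) + s₀ / 2 ^ n = x₀ + ((i : ℝ) + 1) * (s₀ / 2 ^ n) := by ring
  have hy : y₀ + j * (s₀ / 2 ^ n) + s₀ / 2 ^ n = y₀ + ((j : ℝ) + 1) * (s₀ / 2 ^ n) := by ring
  simp [dSq, closedSquare, dI, hx, hy]

lemma dI_cover (x₀ : ℝ) {s₀ : ℝ} (hs : 0 < s₀) (n : ℕ) {t : ℝ}
    (ht : t ∈ Icc x₀ (x₀ + s₀)) : ∃ i : ℕ, i + 1 ≤ 2 ^ n ∧ t ∈ dI x₀ s₀ n i := by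
  induction n with
  | zero =>
    refine ⟨0, le_refl 1, ?_⟩
    simp only [dI, pow_zero, Nat.cast_zero, zero_mul, add_zero, zero_add, one_mul, div_one]
    exact ht
  | succ n ih =>
    obtain ⟨i, hi, hmem⟩ := ih
    rw [dI, mem_Icc] at hmem
    obtain ⟨h1, h2⟩ := hmem
    have he : 2 * (s₀ / 2 ^ (n + 1)) = s₀ / 2 ^ n := by
      rw [pow_succ]
      field_simp
    by_cases hc : t ≤ x₀ + (2 * (i : ℝ) + 1) * (s₀ / 2 ^ (n + 1))
    · refine ⟨2 * i, by omega, ?_⟩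
      rw [dI, mem_Icc]
      push_cast
      constructor
      · have : (i : ℝ) * (s₀ / 2 ^ n) = 2 * (i : ℝ) * (s₀ / 2 ^ (n + 1)) := by
          rw [← he]; ring
        linarith
      · linarith
    · push_neg at hc
      refine ⟨2 * i + 1, by omega, ?_⟩
      rw [dI, mem_Icc]
      push_cast
      constructor
      · linarith
      · have : ((i : ℝ) + 1) * (s₀ / 2 ^ n) = (2 * (i : ℝ) + 1 + 1) * (s₀ / 2 ^ (n + 1)) := by
          rw [← he]; ring
        linarith

lemma dI_subset {x₀ s₀ : ℝ} (hs : 0 < s₀) {n i : ℕ} (hi : i + 1 ≤ 2 ^ n) :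
    dI x₀ s₀ n i ⊆ Icc x₀ (x₀ + s₀) := by
  have he : (0 : ℝ) < s₀ / 2 ^ n := by positivity
  have hcast : ((i : ℝ) + 1) ≤ 2 ^ n := by exact_mod_cast hi
  apply Icc_subset_Icc
  · nlinarith [Nat.cast_nonneg (α := ℝ) i]
  · have : ((i : ℝ) + 1) * (s₀ / 2 ^ n) ≤ 2 ^ n * (s₀ / 2 ^ n) :=
      mul_le_mul_of_nonneg_right hcast he.le
    have h2 : (2 : ℝ) ^ n * (s₀ / 2 ^ n) = s₀ := by field_simp
    linarith

lemma dSq_subset {x₀ y₀ s₀ : ℝ} (hs : 0 < s₀) {n i j : ℕ} (hi : i + 1 ≤ 2 ^ n)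
    (hj : j + 1 ≤ 2 ^ n) : dSq x₀ y₀ s₀ n i j ⊆ closedSquare x₀ y₀ s₀ := by
  intro z hz
  obtain ⟨h1, h2⟩ := mem_dSq.1 hz
  exact ⟨dI_subset hs hi h1, dI_subset hs hj h2⟩

lemma diam_closedSquare {x y s : ℝ} (hs : 0 ≤ s) :
    Metric.diam (closedSquare x y s) ≤ 2 * s := by
  apply Metric.diam_le_of_forall_dist_le (by linarith)
  rintro z ⟨hz1, hz2⟩ w ⟨hw1, hw2⟩
  rw [mem_Icc] at hz1 hz2 hw1 hw2
  have hre : |(z - w).re| ≤ s := by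
    rw [Complex.sub_re, abs_le]; constructor <;> [linarith [hz1.1, hw1.2]; linarith [hz1.2, hw1.1]]
  have him : |(z - w).im| ≤ s := by
    rw [Complex.sub_im, abs_le]; constructor <;> [linarith [hz2.1, hw2.2]; linarith [hz2.2, hw2.1]]
  calc dist z w = ‖z - w‖ := Complex.dist_eq z w
    _ ≤ |(z - w).re| + |(z - w).im| := Complex.norm_le_abs_re_add_abs_im _
    _ ≤ 2 * s := by linarith

lemma interior_dSq {x₀ y₀ s₀ : ℝ} {n i j : ℕ} :
    interior (dSq x₀ y₀ s₀ n i j) =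
      {z : ℂ | z.re ∈ Ioo (x₀ + i * (s₀ / 2 ^ n)) (x₀ + (i + 1) * (s₀ / 2 ^ n)) ∧
        z.im ∈ Ioo (y₀ + j * (s₀ / 2 ^ n)) (y₀ + (j + 1) * (s₀ / 2 ^ n))} := by
  have hx : x₀ + i * (s₀ / 2 ^ n) + s₀ / 2 ^ n = x₀ + ((i : ℝ) + 1) * (s₀ / 2 ^ n) := by ring
  have hy : y₀ + j * (s₀ / 2 ^ n) + s₀ / 2 ^ n = y₀ + ((j : ℝ) + 1) * (s₀ / 2 ^ n) := by ring
  have h : dSq x₀ y₀ s₀ n i j =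
      Icc (x₀ + i * (s₀ / 2 ^ n)) (x₀ + ((i : ℝ) + 1) * (s₀ / 2 ^ n)) ×ℂ
      Icc (y₀ + j * (s₀ / 2 ^ n)) (y₀ + ((j : ℝ) + 1) * (s₀ / 2 ^ n)) := by
    ext z
    rw [Complex.mem_reProdIm]
    simp [dSq, closedSquare, hx, hy]
  rw [h, Complex.interior_reProdIm, interior_Icc, interior_Icc]
  ext z
  rw [Complex.mem_reProdIm]
  rfl

lemma dI_subset_or_disjoint {x₀ s₀ : ℝ} (hs : 0 < s₀) {n m : ℕ} (i j : ℕ) (hnm : n ≤ m) :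
    dI x₀ s₀ m j ⊆ dI x₀ s₀ n i ∨
      Disjoint (Ioo (x₀ + i * (s₀ / 2 ^ n)) (x₀ + (i + 1) * (s₀ / 2 ^ n)))
        (Ioo (x₀ + j * (s₀ / 2 ^ m)) (x₀ + (j + 1) * (s₀ / 2 ^ m))) := by
  have hem : (0 : ℝ) < s₀ / 2 ^ m := by positivity
  have h2m : (2 : ℝ) ^ m = 2 ^ n * 2 ^ (m - n) := by
    rw [← pow_add]; congr 1; omega
  have hk : (2 ^ (m - n) : ℝ) * (s₀ / 2 ^ m) = s₀ / 2 ^ n := by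
    rw [h2m]
    have h1 : (0 : ℝ) < 2 ^ n := by positivity
    have h2 : (0 : ℝ) < 2 ^ (m - n) := by positivity
    field_simp
  by_cases h1 : i * 2 ^ (m - n) ≤ j ∧ j + 1 ≤ (i + 1) * 2 ^ (m - n)
  · left
    obtain ⟨ha, hb⟩ := h1
    have ha' : (i : ℝ) * 2 ^ (m - n) ≤ j := by exact_mod_cast ha
    have hb' : (j : ℝ) + 1 ≤ ((i : ℝ) + 1) * 2 ^ (m - n) := by exact_mod_cast hb
    apply Icc_subset_Icc
    · have := mul_le_mul_of_nonneg_right ha' hem.le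
      nlinarith [hk]
    · have := mul_le_mul_of_nonneg_right hb' hem.le
      nlinarith [hk]
  · right
    rw [Set.disjoint_left]
    rintro t ⟨ht1, ht2⟩ ⟨ht3, ht4⟩
    rcases not_and_or.1 h1 with h | h
    · push_neg at h
      have h' : (j : ℝ) + 1 ≤ (i : ℝ) * 2 ^ (m - n) := by exact_mod_cast h
      have := mul_le_mul_of_nonneg_right h' hem.le
      nlinarith [hk]
    · push_neg at h
      have h' : ((i : ℝ) + 1) * 2 ^ (m - n) ≤ (j : ℝ) := by
        have : (i + 1) * 2 ^ (m - n) ≤ j := by omega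
        exact_mod_cast this
      have := mul_le_mul_of_nonneg_right h' hem.le
      nlinarith [hk]

lemma dI_eq_of_subset {x₀ s₀ : ℝ} (hs : 0 < s₀) {n i j : ℕ}
    (h : dI x₀ s₀ n j ⊆ dI x₀ s₀ n i) : j = i := by
  have he : (0 : ℝ) < s₀ / 2 ^ n := by positivity
  have h1 := h (left_mem_Icc.2 (by nlinarith [Nat.cast_nonneg (α := ℝ) j]))
  have h2 := h (right_mem_Icc.2 (by nlinarith [Nat.cast_nonneg (α := ℝ) j]))
  rw [dI, mem_Icc] at h1 h2
  have : (j : ℝ) = (i : ℝ) := by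
    have hji : (j : ℝ) * (s₀ / 2 ^ n) = (i : ℝ) * (s₀ / 2 ^ n) := by nlinarith [h1.1, h2.2]
    exact mul_right_cancel₀ he.ne' hji
  exact_mod_cast this

theorem vitali_type_covering_countable
    (x₀ y₀ s₀ : ℝ) (hs₀ : 0 < s₀) (A : Set ℂ) (hA : A.Nonempty)
    (hAR : A ⊆ closedSquare x₀ y₀ s₀) (F : Set (Set ℂ))
    (hF : ∀ S ∈ F, (∃ x y s, 0 < s ∧ S = closedSquare x y s) ∧ S ⊆ closedSquare x₀ y₀ s₀)
    (hfine : ∀ a ∈ A, ∃ δ : ℝ, 0 < δ ∧ ∀ x y s : ℝ, 0 < s →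
      closedSquare x y s ⊆ closedSquare x₀ y₀ s₀ → a ∈ closedSquare x y s → Metric.diam (closedSquare x y s) < δ →
      closedSquare x y s ∈ F) :
    ∃ G ⊆ F, G.Countable ∧
      (G.Pairwise fun S T => Disjoint (interior S) (interior T)) ∧
      A ⊆ ⋃₀ G := by
  classical
  -- For every `a ∈ A` some dyadic square containing `a` is in `F`.
  have hex : ∀ a, a ∈ A → ∃ n : ℕ, ∃ i j : ℕ, i + 1 ≤ 2 ^ n ∧ j + 1 ≤ 2 ^ n ∧
      a ∈ dSq x₀ y₀ s₀ n i j ∧ dSq x₀ y₀ s₀ n i j ∈ F := by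
    intro a ha
    obtain ⟨δ, hδ, hδ'⟩ := hfine a ha
    obtain ⟨n, hn⟩ := pow_unbounded_of_one_lt (2 * s₀ / δ) (one_lt_two (α := ℝ))
    have hn' : s₀ / 2 ^ n < δ / 2 := by
      rw [div_lt_iff₀ hδ] at hn
      rw [div_lt_div_iff₀ (by positivity) two_pos]
      linarith
    obtain ⟨hre, him⟩ := hAR ha
    obtain ⟨i, hi, hire⟩ := dI_cover x₀ hs₀ n hre
    obtain ⟨j, hj, hjim⟩ := dI_cover y₀ hs₀ n him
    have hmem : a ∈ dSq x₀ y₀ s₀ n i j := mem_dSq.2 ⟨hire, hjim⟩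
    refine ⟨n, i, j, hi, hj, hmem, ?_⟩
    have hdiam : Metric.diam (dSq x₀ y₀ s₀ n i j) < δ := by
      calc Metric.diam (dSq x₀ y₀ s₀ n i j) ≤ 2 * (s₀ / 2 ^ n) :=
            diam_closedSquare (by positivity)
        _ < δ := by linarith
    exact hδ' _ _ _ (by positivity) (dSq_subset hs₀ hi hj) hmem hdiam
  -- Minimal level selection.
  have hmin : ∀ a, ∀ ha : a ∈ A, ∃ n : ℕ,
      (∃ i j : ℕ, i + 1 ≤ 2 ^ n ∧ j + 1 ≤ 2 ^ n ∧
        a ∈ dSq x₀ y₀ s₀ n i j ∧ dSq x₀ y₀ s₀ n i j ∈ F) ∧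
      ∀ m, m < n → ¬ (∃ i j : ℕ, i + 1 ≤ 2 ^ m ∧ j + 1 ≤ 2 ^ m ∧
        a ∈ dSq x₀ y₀ s₀ m i j ∧ dSq x₀ y₀ s₀ m i j ∈ F) := by
    intro a ha
    exact ⟨Nat.find (hex a ha), Nat.find_spec (hex a ha),
      fun m hm => Nat.find_min (hex a ha) hm⟩
  choose N hN hNmin using hmin
  choose I J hI hJ hmem hFmem using hN
  set D : ∀ a, a ∈ A → Set ℂ := fun a ha => dSq x₀ y₀ s₀ (N a ha) (I a ha) (J a ha) with hD
  refine ⟨{S | ∃ a, ∃ ha : a ∈ A, S = D a ha}, ?_, ?_, ?_, ?_⟩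
  · rintro S ⟨a, ha, rfl⟩
    exact hFmem a ha
  · apply Set.Countable.mono
      (show {S | ∃ a, ∃ ha : a ∈ A, S = D a ha} ⊆
        Set.range (fun p : ℕ × ℕ × ℕ => dSq x₀ y₀ s₀ p.1 p.2.1 p.2.2) from ?_)
    · exact Set.countable_range _
    · rintro S ⟨a, ha, rfl⟩
      exact ⟨(N a ha, I a ha, J a ha), rfl⟩
  · -- pairwise disjoint interiors
    have key : ∀ a, ∀ ha : a ∈ A, ∀ b, ∀ hb : b ∈ A, N a ha ≤ N b hb →
        D a ha ≠ D b hb → Disjoint (interior (D a ha)) (interior (D b hb)) := by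
      intro a ha b hb hle hne
      rcases dI_subset_or_disjoint (x₀ := x₀) hs₀ (I a ha) (I b hb) hle with hre | hre
      · rcases dI_subset_or_disjoint (x₀ := y₀) hs₀ (J a ha) (J b hb) hle with him | him
        · -- both coordinates nested : D b ⊆ D a, contradict minimality / distinctness
          exfalso
          have hsub : D b hb ⊆ D a ha := by
            intro z hz
            obtain ⟨h1, h2⟩ := mem_dSq.1 hz
            exact mem_dSq.2 ⟨hre h1, him h2⟩
          have hbS : b ∈ D a ha := hsub (hmem b hb)
          have hnab : N a ha = N b hb := by
            by_contra hne'
            exact hNmin b hb (N a ha) (lt_of_le_of_ne hle hne')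
              ⟨I a ha, J a ha, hI a ha, hJ a ha, hbS, hFmem a ha⟩
          rw [← hnab] at hre him
          have hIeq : I b hb = I a ha := dI_eq_of_subset hs₀ hre
          have hJeq : J b hb = J a ha := dI_eq_of_subset hs₀ him
          exact hne (by rw [hD]; simp only; rw [hnab, ← hIeq, ← hJeq])
        · rw [interior_dSq, interior_dSq, Set.disjoint_left]
          rintro z ⟨_, h2⟩ ⟨_, h4⟩
          exact Set.disjoint_left.1 him h2 h4
      · rw [interior_dSq, interior_dSq, Set.disjoint_left]
        rintro z ⟨h1, _⟩ ⟨h3, _⟩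
        exact Set.disjoint_left.1 hre h1 h3
    rintro S ⟨a, ha, rfl⟩ T ⟨b, hb, rfl⟩ hne
    rcases le_total (N a ha) (N b hb) with h | h
    · exact key a ha b hb h hne
    · exact (key b hb a ha h (Ne.symm hne)).symm
  · intro a ha
    exact ⟨D a ha, ⟨a, ha, rfl⟩, hmem a ha⟩
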